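/- Let f : ℝ^{n+1} → ℂ be integrable and define for ω ∈ S^{n-1} the ray transform F(t,x;ω) = ∫_ℝ f(t+s, x+sω) ds. Then the Fourier transform of x ↦ F(t,x;ω) at ξ ∈ ℝ^n equals e^{−i(ω·ξ)t} · f̂(−ω·ξ, ξ), where f̂ denotes the Fourier transform of f in all n+1 variables. In particular, e^{it(ω·ξ)}·(F_{x→ξ}F(t,·;ω))(ξ) is independent of t. -/

import Mathlib

open MeasureTheory

private lemma stmt_2_aux (n : ℕ) (f : ℝ × EuclideanSpace ℝ (Fin n) → ℂ) (t : ℝ)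
    (ω ξ : EuclideanSpace ℝ (Fin n)) (p : ℝ × EuclideanSpace ℝ (Fin n)) :
    Complex.exp (-Complex.I * ((inner ℝ (p.2 - (p.1 - t) • ω) ξ : ℝ) : ℂ)) * f p
      = Complex.exp (-Complex.I * ((inner ℝ ω ξ : ℝ) : ℂ) * (t : ℂ)) *
        (Complex.exp (-Complex.I * ((p.1 * (-(inner ℝ ω ξ : ℝ)) + (inner ℝ p.2 ξ : ℝ) : ℝ) : ℂ)) *
          f p) := by
  rw [← mul_assoc, ← Complex.exp_add]
  congr 2
  have hin : (inner ℝ (p.2 - (p.1 - t) • ω) ξ : ℝ)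
      = (inner ℝ p.2 ξ : ℝ) - (p.1 - t) * (inner ℝ ω ξ : ℝ) := by
    rw [inner_sub_left, real_inner_smul_left]
  rw [hin]
  push_cast
  ring

set_option maxHeartbeats 1000000 in
theorem stmt_2 (n : ℕ) (f : ℝ × EuclideanSpace ℝ (Fin n) → ℂ)
    (hf : Integrable f)
    (ω : EuclideanSpace ℝ (Fin n)) (hω : ‖ω‖ = 1)
    (t : ℝ) (ξ : EuclideanSpace ℝ (Fin n)) :
    (∫ x : EuclideanSpace ℝ (Fin n),
        Complex.exp (-Complex.I * (inner ℝ x ξ : ℝ)) * ∫ s : ℝ, f (t + s, x + s • ω)) =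
      Complex.exp (-Complex.I * ((inner ℝ ω ξ : ℝ) : ℂ) * (t : ℂ)) *
        ∫ p : ℝ × EuclideanSpace ℝ (Fin n),
          Complex.exp (-Complex.I * ((p.1 * (-(inner ℝ ω ξ : ℝ)) + (inner ℝ p.2 ξ : ℝ) : ℝ) : ℂ)) *
            f p := by
  set Φ : ℝ × EuclideanSpace ℝ (Fin n) → ℝ × EuclideanSpace ℝ (Fin n) :=
    fun p => (t + p.1, p.2 + p.1 • ω) with hΦdef
  have hΦ : MeasurePreserving Φ volume volume := by
    rw [Measure.volume_eq_prod]
    exact (measurePreserving_add_left (volume : Measure ℝ) t).skew_product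
      (g := fun s x => x + s • ω)
      (by fun_prop)
      (Filter.Eventually.of_forall fun s => map_add_right_eq_self volume (s • ω))
  have heΦ : MeasurableEmbedding Φ := by
    exact Homeomorph.measurableEmbedding
      { toFun := Φ
        invFun := fun q => (q.1 - t, q.2 - (q.1 - t) • ω)
        left_inv := by
          rintro ⟨s, x⟩
          simp [hΦdef, add_sub_cancel_left]
        right_inv := by
          rintro ⟨u, y⟩
          simp [hΦdef]
        continuous_toFun := by simp only [hΦdef]; fun_prop
        continuous_invFun := by fun_prop }
  set h : ℝ × EuclideanSpace ℝ (Fin n) → ℂ :=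
    fun p => Complex.exp (-Complex.I * ((inner ℝ (p.2 - (p.1 - t) • ω) ξ : ℝ) : ℂ)) * f p with hhdef
  have hnorm : ∀ p : ℝ × EuclideanSpace ℝ (Fin n),
      ‖Complex.exp (-Complex.I * ((inner ℝ (p.2 - (p.1 - t) • ω) ξ : ℝ) : ℂ))‖ ≤ 1 := by
    intro p
    rw [Complex.norm_exp]
    simp
  have hcont : Continuous fun p : ℝ × EuclideanSpace ℝ (Fin n) =>
      Complex.exp (-Complex.I * ((inner ℝ (p.2 - (p.1 - t) • ω) ξ : ℝ) : ℂ)) := by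
    apply Complex.continuous_exp.comp
    apply Continuous.mul continuous_const
    apply Complex.continuous_ofReal.comp
    exact Continuous.inner
      (continuous_snd.sub ((continuous_fst.sub continuous_const).smul continuous_const))
      continuous_const
  have hih : Integrable h := by
    rw [hhdef]
    exact hf.bdd_mul hcont.aestronglyMeasurable (.of_forall hnorm)
  have step1 : ∀ x : EuclideanSpace ℝ (Fin n),
      Complex.exp (-Complex.I * ((inner ℝ x ξ : ℝ) : ℂ)) * ∫ s : ℝ, f (t + s, x + s • ω)
        = ∫ s : ℝ, h (Φ (s, x)) := by
    intro x
    rw [← integral_const_mul]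
    congr 1; ext s
    have hx : (x + s • ω) - (t + s - t) • ω = x := by
      rw [add_sub_cancel_left]
      abel
    simp only [hhdef, hΦdef, hx]
  have hswapemb : MeasurableEmbedding
      (fun z : EuclideanSpace ℝ (Fin n) × ℝ => Prod.swap z) :=
    MeasurableEquiv.prodComm.measurableEmbedding
  have hswapmp : MeasurePreserving
      (fun z : EuclideanSpace ℝ (Fin n) × ℝ => Prod.swap z) volume volume := by
    rw [Measure.volume_eq_prod, Measure.volume_eq_prod]
    exact Measure.measurePreserving_swap
  have hcompmp : MeasurePreserving
      (fun z : EuclideanSpace ℝ (Fin n) × ℝ => Φ (Prod.swap z)) volume volume :=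
    hΦ.comp hswapmp
  have hcompemb : MeasurableEmbedding
      (fun z : EuclideanSpace ℝ (Fin n) × ℝ => Φ (Prod.swap z)) :=
    heΦ.comp hswapemb
  have hint : Integrable (fun z : EuclideanSpace ℝ (Fin n) × ℝ => h (Φ (Prod.swap z))) volume :=
    (hcompmp.integrable_comp_emb hcompemb).2 hih
  have hint' : Integrable (fun z : EuclideanSpace ℝ (Fin n) × ℝ => h (Φ (Prod.swap z)))
      ((volume : Measure (EuclideanSpace ℝ (Fin n))).prod (volume : Measure ℝ)) := by
    rw [← Measure.volume_eq_prod]; exact hint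
  calc (∫ x : EuclideanSpace ℝ (Fin n),
        Complex.exp (-Complex.I * ((inner ℝ x ξ : ℝ) : ℂ)) * ∫ s : ℝ, f (t + s, x + s • ω))
      = ∫ x : EuclideanSpace ℝ (Fin n), ∫ s : ℝ, h (Φ (Prod.swap (x, s))) := by
        exact integral_congr_ae (.of_forall step1)
    _ = ∫ z : EuclideanSpace ℝ (Fin n) × ℝ, h (Φ (Prod.swap z)) := by
        rw [Measure.volume_eq_prod]
        exact (integral_prod (fun z => h (Φ (Prod.swap z))) hint').symm
    _ = ∫ p : ℝ × EuclideanSpace ℝ (Fin n), h p :=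
        hcompmp.integral_comp hcompemb h
    _ = ∫ p : ℝ × EuclideanSpace ℝ (Fin n),
          Complex.exp (-Complex.I * ((inner ℝ ω ξ : ℝ) : ℂ) * (t : ℂ)) *
            (Complex.exp
                (-Complex.I * ((p.1 * (-(inner ℝ ω ξ : ℝ)) + (inner ℝ p.2 ξ : ℝ) : ℝ) : ℂ)) *
              f p) :=
        integral_congr_ae (.of_forall fun p => stmt_2_aux n f t ω ξ p)
    _ = Complex.exp (-Complex.I * ((inner ℝ ω ξ : ℝ) : ℂ) * (t : ℂ)) *
        ∫ p : ℝ × EuclideanSpace ℝ (Fin n),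
          Complex.exp (-Complex.I * ((p.1 * (-(inner ℝ ω ξ : ℝ)) + (inner ℝ p.2 ξ : ℝ) : ℝ) : ℂ)) *
            f p :=
        integral_const_mul _ _
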